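/- Let M be a maximum matching of a graph G and let G' = G + e be obtained by inserting a single edge e = (u,v). If M is not a maximum matching of G', then every augmenting path in G' with respect to M uses the edge e; moreover, augmenting along any such path yields a maximum matching of G'. -/

import Mathlib

open Finset

/-- `M` is a matching of `G`: every edge of `M` is an edge of `G` and no two
distinct edges of `M` share an endpoint. -/
def IsMatching {V : Type*} (G : SimpleGraph V) (M : Finset (Sym2 V)) : Prop :=
  (∀ e ∈ M, e ∈ G.edgeSet) ∧ ∀ e ∈ M, ∀ f ∈ M, e ≠ f → ∀ v : V, v ∈ e → v ∉ f

/-- A vertex is free w.r.t. `M` if it lies on no edge of `M`. -/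
def IsFree {V : Type*} (M : Finset (Sym2 V)) (v : V) : Prop := ∀ e ∈ M, v ∉ e

/-- `M` is a maximum-cardinality matching of `G`. -/
def IsMaximumMatching {V : Type*} (G : SimpleGraph V) (M : Finset (Sym2 V)) : Prop :=
  IsMatching G M ∧ ∀ M' : Finset (Sym2 V), IsMatching G M' → M'.card ≤ M.card

/-- `M` is a maximal matching of `G`: it is a matching and every edge of `G`
has at least one matched endpoint. -/
def IsMaximalMatching {V : Type*} (G : SimpleGraph V) (M : Finset (Sym2 V)) : Prop :=
  IsMatching G M ∧ ∀ e ∈ G.edgeSet, ∃ v : V, v ∈ e ∧ ¬ IsFree M v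

/-- `p` is an augmenting path w.r.t. `M`: a simple path of positive length
between two free vertices whose edges alternate, starting (and hence, since the
endpoints are free, also ending) with a non-matching edge. -/
def IsAugPath {V : Type*} (G : SimpleGraph V) (M : Finset (Sym2 V)) {a b : V}
    (p : G.Walk a b) : Prop :=
  p.IsPath ∧ 0 < p.length ∧ IsFree M a ∧ IsFree M b ∧
    ∀ (i : ℕ) (h : i < p.edges.length), p.edges.get ⟨i, h⟩ ∈ M ↔ Odd i

set_option linter.unusedSectionVars false
set_option linter.unusedVariables false

section Aux
variable {V : Type*} [DecidableEq V]

lemma mem_support_of_mem_edges' {H : SimpleGraph V} {a b : V} (p : H.Walk a b)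
    {e : Sym2 V} {w : V} (he : e ∈ p.edges) (hw : w ∈ e) : w ∈ p.support := by
  induction e with
  | h x y =>
    rcases Sym2.mem_iff.1 hw with rfl | rfl
    · exact p.fst_mem_support_of_mem_edges he
    · exact p.snd_mem_support_of_mem_edges he

lemma aug_step (H : SimpleGraph V) :
    ∀ (n : ℕ) (M : Finset (Sym2 V)), IsMatching H M → ∀ (a b : V) (p : H.Walk a b),
      p.length = n → IsAugPath H M p →
      IsMatching H (symmDiff M p.edges.toFinset) ∧
        (symmDiff M p.edges.toFinset).card = M.card + 1 := by
  intro n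
  induction n using Nat.strong_induction_on with
  | _ n ih =>
  intro M hM a b p hlen hp
  obtain ⟨hpath, hpos, hfa, hfb, halt⟩ := hp
  cases p with
  | nil => simp at hpos
  | @cons _ x _ h q =>
    cases q with
    | nil =>
      have he0 : s(a, b) ∉ M := by
        have := halt 0 (by simp)
        simpa using this
      have hkey : symmDiff M ((SimpleGraph.Walk.cons h .nil).edges).toFinset
          = insert s(a, b) M := by
        ext f
        by_cases hf : f = s(a, b) <;>
          simp [Finset.mem_symmDiff, hf, he0]
      rw [hkey]
      refine ⟨⟨?_, ?_⟩, ?_⟩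
      · intro f hf
        rcases Finset.mem_insert.1 hf with rfl | hf
        · exact H.mem_edgeSet.2 h
        · exact hM.1 f hf
      · intro f hf g hg hfg w hwf
        rcases Finset.mem_insert.1 hf with hf0 | hfM
        · rcases Finset.mem_insert.1 hg with hg0 | hgM
          · exact absurd (hf0.trans hg0.symm) hfg
          · subst hf0
            rcases Sym2.mem_iff.1 hwf with rfl | rfl
            · exact hfa g hgM
            · exact hfb g hgM
        · rcases Finset.mem_insert.1 hg with hg0 | hgM
          · subst hg0
            intro hwg
            rcases Sym2.mem_iff.1 hwg with rfl | rfl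
            · exact hfa f hfM hwf
            · exact hfb f hfM hwf
          · exact hM.2 f hfM g hgM hfg w hwf
      · exact Finset.card_insert_of_notMem he0
    | @cons _ y _ h' r =>
      have hE : (SimpleGraph.Walk.cons h (SimpleGraph.Walk.cons h' r)).edges
          = s(a, x) :: s(x, y) :: r.edges := by simp
      simp only [hE] at halt
      obtain ⟨hpath1, ha1⟩ := (SimpleGraph.Walk.cons_isPath_iff _ _).1 hpath
      obtain ⟨hrpath, hx1⟩ := (SimpleGraph.Walk.cons_isPath_iff _ _).1 hpath1
      rw [SimpleGraph.Walk.support_cons, List.mem_cons] at ha1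
      push_neg at ha1
      obtain ⟨hax, har⟩ := ha1
      have hnd := hpath.isTrail.edges_nodup
      rw [hE] at hnd
      simp only [List.nodup_cons, List.mem_cons] at hnd
      push_neg at hnd
      obtain ⟨⟨hne01, he0R⟩, he1R, -⟩ := hnd
      have he0 : s(a, x) ∉ M := by
        have := halt 0 (by simp)
        simpa using this
      have he1 : s(x, y) ∈ M := by
        have := halt 1 (by simp)
        simpa using this
      have hrpos : 0 < r.length := by
        by_contra hcon
        have h0 : r.length = 0 := by omega
        have hyb : y = b := SimpleGraph.Walk.eq_of_length_eq_zero h0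
        subst hyb
        exact hfb _ he1 (by simp)
      have hM2 : IsMatching H (M.erase s(x, y)) :=
        ⟨fun f hf => hM.1 f (Finset.mem_of_mem_erase hf),
         fun f hf g hg => hM.2 f (Finset.mem_of_mem_erase hf) g (Finset.mem_of_mem_erase hg)⟩
      have hfy : IsFree (M.erase s(x, y)) y := by
        intro f hf hyf
        obtain ⟨hfne, hfM⟩ := Finset.mem_erase.1 hf
        exact hM.2 s(x, y) he1 f hfM (Ne.symm hfne) y (by simp) hyf
      have hfb2 : IsFree (M.erase s(x, y)) b :=
        fun f hf => hfb f (Finset.mem_of_mem_erase hf)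
      have haltr : ∀ (i : ℕ) (hi : i < r.edges.length),
          r.edges.get ⟨i, hi⟩ ∈ M.erase s(x, y) ↔ Odd i := by
        intro i hi
        have h2 : i + 2 < (s(a, x) :: s(x, y) :: r.edges).length := by
          simp only [List.length_cons]; omega
        have hmem : r.edges.get ⟨i, hi⟩ ∈ M ↔ Odd (i + 2) := halt (i + 2) h2
        have hne1 : r.edges.get ⟨i, hi⟩ ≠ s(x, y) := by
          intro hcon
          exact he1R (hcon ▸ List.get_mem _ _)
        have hodd : Odd (i + 2) ↔ Odd i := by
          rw [Nat.odd_iff, Nat.odd_iff]; omega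
        rw [Finset.mem_erase]
        exact ⟨fun hh => hodd.1 (hmem.1 hh.2), fun hh => ⟨hne1, hmem.2 (hodd.2 hh)⟩⟩
      have hlen' : r.length + 2 = n := by
        simpa [SimpleGraph.Walk.length_cons] using hlen
      obtain ⟨hQmatch, hQcard⟩ := ih r.length (by omega) (M.erase s(x, y)) hM2 y b r rfl
        ⟨hrpath, hrpos, hfy, hfb2, haltr⟩
      have he0M2 : s(a, x) ∉ symmDiff (M.erase s(x, y)) r.edges.toFinset := by
        intro hcon
        rcases Finset.mem_symmDiff.1 hcon with ⟨hm, -⟩ | ⟨hr, -⟩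
        · exact he0 (Finset.mem_of_mem_erase hm)
        · exact he0R (List.mem_toFinset.1 hr)
      have hkey : symmDiff M ((SimpleGraph.Walk.cons h (SimpleGraph.Walk.cons h' r)).edges).toFinset
          = insert s(a, x) (symmDiff (M.erase s(x, y)) r.edges.toFinset) := by
        ext f
        rw [hE]
        simp only [Finset.mem_symmDiff, Finset.mem_insert, List.toFinset_cons,
          Finset.mem_insert, List.mem_toFinset, Finset.mem_erase]
        by_cases hf0 : f = s(a, x)
        · subst hf0; simp [he0, he0R]
        · by_cases hf1 : f = s(x, y)
          · subst hf1
            simp [he1, he1R, (Ne.symm hne01)]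
          · simp only [hf0, hf1, false_or]
            tauto
      have hMcard : (M.erase s(x, y)).card + 1 = M.card := by
        rw [Finset.card_erase_of_mem he1]
        have : 0 < M.card := Finset.card_pos.2 ⟨_, he1⟩
        omega
      have hclaim : ∀ g ∈ symmDiff (M.erase s(x, y)) r.edges.toFinset,
          ∀ w ∈ s(a, x), w ∉ g := by
        intro g hg w hw hwg
        rcases Finset.mem_symmDiff.1 hg with ⟨hgM, -⟩ | ⟨hgR, -⟩
        · obtain ⟨hgne, hgM'⟩ := Finset.mem_erase.1 hgM
          rcases Sym2.mem_iff.1 hw with rfl | rfl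
          · exact hfa g hgM' hwg
          · exact hM.2 s(w, y) he1 g hgM' (Ne.symm hgne) w (by simp) hwg
        · have hsup : w ∈ r.support :=
            mem_support_of_mem_edges' r (List.mem_toFinset.1 hgR) hwg
          rcases Sym2.mem_iff.1 hw with rfl | rfl
          · exact har hsup
          · exact hx1 hsup
      rw [hkey]
      refine ⟨⟨?_, ?_⟩, ?_⟩
      · intro f hf
        rcases Finset.mem_insert.1 hf with rfl | hf
        · exact H.mem_edgeSet.2 h
        · exact hQmatch.1 f hf
      · intro f hf g hg hfg w hwf
        rcases Finset.mem_insert.1 hf with hf0 | hfM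
        · rcases Finset.mem_insert.1 hg with hg0 | hgM
          · exact absurd (hf0.trans hg0.symm) hfg
          · subst hf0
            exact hclaim g hgM w hwf
        · rcases Finset.mem_insert.1 hg with hg0 | hgM
          · subst hg0
            intro hwg
            exact hclaim f hfM w hwg hwf
          · exact hQmatch.2 f hfM g hgM hfg w hwf
      · rw [Finset.card_insert_of_notMem he0M2, hQcard, hMcard]

end Aux

/-- Edge insertion into a graph with a maximum matching: if the matching is no
longer maximum in `G + e`, then every augmenting path in `G + e` uses `e`,
and augmenting along any such path yields a maximum matching of `G + e`. -/
theorem insert_edge_aug_path {V : Type*} [DecidableEq V] (G : SimpleGraph V)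
    (M : Finset (Sym2 V)) (u v : V) (huv : u ≠ v) (hne : ¬ G.Adj u v)
    (hM : IsMaximumMatching G M)
    (G' : SimpleGraph V) (hG' : G' = G ⊔ SimpleGraph.fromEdgeSet {s(u, v)})
    (hnotmax : ¬ IsMaximumMatching G' M) :
    (∀ (a b : V) (p : G'.Walk a b), IsAugPath G' M p → s(u, v) ∈ p.edges) ∧
    (∀ (a b : V) (p : G'.Walk a b), IsAugPath G' M p →
      IsMaximumMatching G' (symmDiff M p.edges.toFinset)) := by
  subst hG'
  have hmemE : ∀ f : Sym2 V, f ∈ (G ⊔ SimpleGraph.fromEdgeSet {s(u, v)}).edgeSet ↔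
      f ∈ G.edgeSet ∨ f = s(u, v) := by
    intro f
    rw [SimpleGraph.edgeSet_sup, Set.mem_union, SimpleGraph.edgeSet_fromEdgeSet]
    constructor
    · rintro (hf | ⟨hf, -⟩)
      · exact Or.inl hf
      · exact Or.inr hf
    · rintro (hf | rfl)
      · exact Or.inl hf
      · exact Or.inr ⟨rfl, by simp [huv]⟩
  have hMG' : IsMatching (G ⊔ SimpleGraph.fromEdgeSet {s(u, v)}) M :=
    ⟨fun f hf => (hmemE f).2 (Or.inl (hM.1.1 f hf)), hM.1.2⟩
  have part1 : ∀ (a b : V) (p : (G ⊔ SimpleGraph.fromEdgeSet {s(u, v)}).Walk a b),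
      IsAugPath _ M p → s(u, v) ∈ p.edges := by
    intro a b p hp
    by_contra hcon
    have hsub : ∀ f ∈ p.edges, f ∈ G.edgeSet := by
      intro f hf
      rcases (hmemE f).1 (p.edges_subset_edgeSet hf) with h1 | rfl
      · exact h1
      · exact (hcon hf).elim
    obtain ⟨h1, h2, h3, h4, h5⟩ := hp
    have hq : IsAugPath G M (p.transfer G hsub) := by
      refine ⟨h1.transfer hsub, ?_, h3, h4, ?_⟩
      · rw [SimpleGraph.Walk.length_transfer]; exact h2
      · intro i hi
        have hEq : (p.transfer G hsub).edges = p.edges := p.edges_transfer hsub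
        have hi' : i < p.edges.length := by rwa [hEq] at hi
        have : (p.transfer G hsub).edges.get ⟨i, hi⟩ = p.edges.get ⟨i, hi'⟩ := by
          rw [List.get_of_eq hEq]
        rw [this]
        exact h5 i hi'
    obtain ⟨hmatch, hcard⟩ := aug_step G (p.transfer G hsub).length M hM.1 a b
      (p.transfer G hsub) rfl hq
    have := hM.2 _ hmatch
    omega
  refine ⟨part1, ?_⟩
  intro a b p hp
  obtain ⟨hmatch, hcard⟩ := aug_step _ p.length M hMG' a b p rfl hp
  refine ⟨hmatch, ?_⟩
  intro M' hM'
  rw [hcard]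
  have hErase : IsMatching G (M'.erase s(u, v)) := by
    refine ⟨?_, fun f hf g hg => hM'.2 f (Finset.mem_of_mem_erase hf) g
      (Finset.mem_of_mem_erase hg)⟩
    intro f hf
    obtain ⟨hfne, hfM⟩ := Finset.mem_erase.1 hf
    rcases (hmemE f).1 (hM'.1 f hfM) with h1 | rfl
    · exact h1
    · exact absurd rfl hfne
  have h1 := hM.2 _ hErase
  by_cases hmem : s(u, v) ∈ M'
  · have := Finset.card_erase_of_mem hmem
    have : 0 < M'.card := Finset.card_pos.2 ⟨_, hmem⟩
    have h2 := Finset.card_erase_of_mem hmem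
    omega
  · rw [Finset.erase_eq_of_notMem hmem] at h1
    omega
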